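/- Let (u_n) be a sequence of measurable functions on [0,T] × 𝕋 converging almost everywhere to u, and suppose there is a constant C such that for all n and all δ ∈ (0,1), meas{(t,x) : u_n(t,x) < δ} ≤ C/(−ln δ). Then meas{(t,x) : u(t,x) = 0} = 0, i.e., u > 0 almost everywhere provided u ≥ 0 a.e. -/

import Mathlib

open MeasureTheory Set Filter

/-- If nonnegative measurable `u_n → u` a.e. on `[0,T] × 𝕋` and
`meas{u_n < δ} ≤ C/(-ln δ)` for all `n` and `δ ∈ (0,1)`, then `meas{u = 0} = 0`,
i.e. `u > 0` a.e. provided `u ≥ 0` a.e. -/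
theorem stmt8 (T C : ℝ) (hT : 0 < T)
    (un : ℕ → ℝ × ℝ → ℝ) (u : ℝ × ℝ → ℝ)
    (hmeasn : ∀ n, Measurable (un n)) (hmeas : Measurable u)
    (hconv : ∀ᵐ p ∂(volume.restrict (Icc (0:ℝ) T ×ˢ Icc (0:ℝ) 1)),
      Tendsto (fun n => un n p) atTop (nhds (u p)))
    (hbd : ∀ n, ∀ δ ∈ Ioo (0:ℝ) 1,
      (volume ((Icc (0:ℝ) T ×ˢ Icc (0:ℝ) 1) ∩ {p | un n p < δ})).toReal ≤ C / (- Real.log δ))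
    (hnn : ∀ᵐ p ∂(volume.restrict (Icc (0:ℝ) T ×ˢ Icc (0:ℝ) 1)), 0 ≤ u p) :
    volume ((Icc (0:ℝ) T ×ˢ Icc (0:ℝ) 1) ∩ {p | u p = 0}) = 0 := by
  set S : Set (ℝ × ℝ) := Icc (0:ℝ) T ×ˢ Icc (0:ℝ) 1 with hS
  set μ := volume.restrict S with hμ
  have hSfin : volume S ≠ ⊤ :=
    (IsCompact.measure_lt_top (isCompact_Icc.prod isCompact_Icc)).ne
  have hkey : ∀ δ ∈ Ioo (0:ℝ) 1,
      μ {p | u p = 0} ≤ ENNReal.ofReal (C / (- Real.log δ)) := by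
    intro δ hδ
    set A : ℕ → Set (ℝ × ℝ) := fun N => ⋂ n, ⋂ (_ : N ≤ n), {p | un n p < δ} with hA
    have hsub : {p | u p = 0} ≤ᶠ[ae μ] ⋃ N, A N := by
      filter_upwards [hconv] with p hp hp0
      have hp0' : u p = 0 := hp0
      rw [hp0'] at hp
      obtain ⟨N, hN⟩ := eventually_atTop.mp (hp.eventually_lt_const hδ.1)
      exact Set.mem_iUnion.2 ⟨N, Set.mem_iInter₂.2 fun n hn => hN n hn⟩
    have hmono : Monotone A := by
      intro N M hNM p hp
      exact Set.mem_iInter₂.2 fun n hn => Set.mem_iInter₂.1 hp n (hNM.trans hn)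
    calc μ {p | u p = 0} ≤ μ (⋃ N, A N) := measure_mono_ae hsub
      _ = ⨆ N, μ (A N) := hmono.directed_le.measure_iUnion
      _ ≤ ENNReal.ofReal (C / (- Real.log δ)) := by
          apply iSup_le
          intro N
          have h1 : μ (A N) ≤ μ {p | un N p < δ} :=
            measure_mono (fun p hp => Set.mem_iInter₂.1 hp N le_rfl)
          have h2 : μ {p | un N p < δ} = volume (S ∩ {p | un N p < δ}) := by
            rw [hμ, Measure.restrict_apply (measurableSet_lt (hmeasn N) measurable_const),
              Set.inter_comm]
          have h3 : volume (S ∩ {p | un N p < δ}) ≠ ⊤ :=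
            (lt_of_le_of_lt (measure_mono Set.inter_subset_left) hSfin.lt_top).ne
          refine h1.trans ?_
          rw [h2, ← ENNReal.ofReal_toReal h3]
          exact ENNReal.ofReal_le_ofReal (hbd N δ hδ)
  have hzero : μ {p | u p = 0} = 0 := by
    have htend : Tendsto (fun k : ℕ => ENNReal.ofReal (C / (k + 1))) atTop (nhds 0) := by
      have : Tendsto (fun k : ℕ => C / (k + 1)) atTop (nhds 0) :=
        tendsto_const_div_atTop_nhds_zero_nat C |>.comp (tendsto_add_atTop_nat 1) |>.congr
          (fun k => by simp [Function.comp, div_eq_mul_inv])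
      simpa [Function.comp_def] using (ENNReal.continuous_ofReal.tendsto 0).comp this
    have hle : ∀ k : ℕ, μ {p | u p = 0} ≤ ENNReal.ofReal (C / (k + 1)) := by
      intro k
      have hδ : Real.exp (-(k + 1)) ∈ Ioo (0:ℝ) 1 :=
        ⟨Real.exp_pos _, Real.exp_lt_one_iff.2 (neg_lt_zero.mpr (by positivity))⟩
      have := hkey _ hδ
      rwa [Real.log_exp, neg_neg] at this
    have := ge_of_tendsto' htend hle
    exact le_antisymm this zero_le
  rw [Set.inter_comm, ← Measure.restrict_apply
    (show MeasurableSet {p | u p = 0} from hmeas (measurableSet_singleton 0))]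
  exact hzero
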